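/- Let H̃ be an affine Hecke algebra associated to a lattice L with Q ⊆ L ⊆ P for a reduced root system R with Weyl group W. Then the center of H̃ is Z(H̃) = C[X]^W, the W-invariant elements of the commutative subalgebra C[X] = span{X^λ : λ ∈ L}. In particular, any central element z = ∑ c_{λ,w} X^λ T_w has c_{λ,w} = 0 unless w = 1, and satisfies s_i z = z for all simple reflections s_i. -/

import Mathlib

private def bern' {L H : Type*} [AddCommGroup L] [Ring H] (X : L → H) (a : L) (m : ℤ) (l : L) :
    H :=
  if 0 ≤ m then ∑ j ∈ Finset.range m.toNat, X (l - (j : ℤ) • a)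
  else -∑ j ∈ Finset.range (-m).toNat, X (l + ((j : ℤ) + 1) • a)

private lemma bern'_skew {L H : Type*} [AddCommGroup L] [Ring H] (X : L → H) (a : L)
    (m : ℤ) (l : L) : bern' X a (-m) (l - m • a) = - bern' X a m l := by
  rcases lt_trichotomy m 0 with hm | rfl | hm
  · have h1 : (0:ℤ) ≤ -m := by omega
    have h2 : ¬ ((0:ℤ) ≤ m) := by omega
    rw [bern', bern', if_pos h1, if_neg h2, neg_neg]
    have hn : (((-m).toNat : ℤ)) = -m := Int.toNat_of_nonneg h1
    conv_rhs => rw [← Finset.sum_range_reflect]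
    refine Finset.sum_congr rfl fun j hj => ?_
    rw [Finset.mem_range] at hj
    congr 1
    have hc : ((((-m).toNat - 1 - j : ℕ)) : ℤ) = -m - 1 - (j : ℤ) := by omega
    rw [hc]
    module
  · simp [bern']
  · have h1 : ¬ ((0:ℤ) ≤ -m) := by omega
    have h2 : (0:ℤ) ≤ m := by omega
    rw [bern', bern', if_neg h1, if_pos h2, neg_neg]
    have hn : ((m.toNat : ℤ)) = m := Int.toNat_of_nonneg h2
    congr 1
    conv_rhs => rw [← Finset.sum_range_reflect]
    refine Finset.sum_congr rfl fun j hj => ?_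
    rw [Finset.mem_range] at hj
    congr 1
    have hc : (((m.toNat - 1 - j : ℕ)) : ℤ) = m - 1 - (j : ℤ) := by omega
    rw [hc]
    module

/-- **Bernstein's theorem** (Theorem 4.12): the center of an affine Hecke algebra.

Let `R` be a reduced root system with Weyl group `W` (a Coxeter group with simple
reflections `cs.simple i`, acting on a lattice `L` with `Q ⊆ L ⊆ P` via `σ`, by
the reflection formula `sᵢ(l) = l - ⟨l, αᵢ^∨⟩ αᵢ`).  Let `H̃ = H̃_L` be the affine
Hecke algebra of `L`: the `ℂ`-algebra with basis `{X^λ T_w : λ ∈ L, w ∈ W}`,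
where `X : L → H̃` is multiplicative, `T` is multiplicative on reduced products,
the `T_{sᵢ}` satisfy the quadratic relation `T² = (q - q⁻¹)T + 1`, and the
Bernstein relation
`X^λ Tᵢ = Tᵢ X^{sᵢλ} + (q - q⁻¹) (X^λ - X^{sᵢλ})/(1 - X^{-αᵢ})` holds
(the last term written as the explicit geometric sum).  The hypotheses `hdom`
and `hsep` record that `L` contains enough dominant weights (true for any
`Q ⊆ L ⊆ P`).  Then the center of `H̃` is `ℂ[X]^W`, the `W`-invariants of
`ℂ[X]` (spanned by the orbit sums `∑_{w ∈ W} X^{wλ}`); in particular every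
central element `z = ∑ c_{λ,w} X^λ T_w` has `c_{λ,w} = 0` unless `w = 1`, and
its coefficients satisfy `c_{sᵢλ,1} = c_{λ,1}` for every simple reflection. -/
theorem stmt12 {B : Type*} (Mat : CoxeterMatrix B) {W : Type*} [Group W] [Fintype W]
    (cs : CoxeterSystem Mat W)
    {L : Type*} [AddCommGroup L]
    {H : Type*} [Ring H] [Algebra ℂ H]
    (q : ℂ) (hq : q ≠ 0)
    (σ : W →* Multiplicative (L ≃+ L))
    (X : L → H) (T : W → H)
    (α : B → L) (αv : B → (L →+ ℤ))
    (hrefl : ∀ (i : B) (l : L), Multiplicative.toAdd (σ (cs.simple i)) l = l - αv i l • α i)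
    (hpair : ∀ i : B, αv i (α i) = 2)
    (hX0 : X 0 = 1)
    (hXadd : ∀ a b : L, X (a + b) = X a * X b)
    (b : Module.Basis (L × W) ℂ H)
    (hb : ∀ lw : L × W, b lw = X lw.1 * T lw.2)
    (hT1 : T 1 = 1)
    (hTmul : ∀ w w' : W, cs.length (w * w') = cs.length w + cs.length w' →
      T (w * w') = T w * T w')
    (hquad : ∀ i : B, T (cs.simple i) * T (cs.simple i) =
      (q - q⁻¹) • T (cs.simple i) + 1)
    (hBern : ∀ (i : B) (l : L),
      X l * T (cs.simple i) = T (cs.simple i) * X (Multiplicative.toAdd (σ (cs.simple i)) l) +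
        (q - q⁻¹) •
          (if 0 ≤ αv i l then
            ∑ j ∈ Finset.range (αv i l).toNat, X (l - (j : ℤ) • α i)
          else
            -∑ j ∈ Finset.range (-(αv i l)).toNat, X (l + ((j : ℤ) + 1) • α i)))
    (hdom : ∀ l : L, ∃ μ ν : L, (∀ i, 0 ≤ αv i μ) ∧ (∀ i, 0 ≤ αv i ν) ∧ l = μ - ν)
    (hsep : ∀ w : W, w ≠ 1 →
      {x : L | ∃ μ : L, (∀ i, 0 ≤ αv i μ) ∧ x = μ - Multiplicative.toAdd (σ w) μ}.Infinite) :
    Set.center H =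
      ↑(Submodule.span ℂ {h : H | ∃ l : L, h = ∑ w : W, X (Multiplicative.toAdd (σ w) l)}) ∧
    (∀ z ∈ Set.center H, ∀ lw : L × W, lw.2 ≠ 1 → b.repr z lw = 0) ∧
    (∀ z ∈ Set.center H, ∀ (i : B) (l : L),
      b.repr z (Multiplicative.toAdd (σ (cs.simple i)) l, 1) = b.repr z (l, 1)) := by
  classical
  -- ### basic facts about the action and the basis
  have hσmul : ∀ (u v : W) (l : L), Multiplicative.toAdd (σ (u * v)) l
      = Multiplicative.toAdd (σ u) (Multiplicative.toAdd (σ v) l) := fun u v l => by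
    rw [map_mul]; rfl
  have hσ1 : ∀ l : L, Multiplicative.toAdd (σ 1) l = l := fun l => by rw [map_one]; rfl
  obtain ⟨σ', hσ'⟩ : ∃ σ' : W → (L ≃+ L), ∀ w, Multiplicative.toAdd (σ w) = σ' w :=
    ⟨_, fun _ => rfl⟩
  simp only [hσ'] at hrefl hBern hsep hσmul hσ1 ⊢
  clear hσ' σ
  rename' σ' => σ
  have hσs2 : ∀ (i : B) (l : L), σ (cs.simple i) (σ (cs.simple i) l) = l := fun i l => by
    rw [← hσmul, cs.simple_mul_simple_self, hσ1]
  have hb1 : ∀ l : L, b (l, 1) = X l := fun l => by rw [hb]; simp [hT1]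
  have hXb : ∀ (ν : L) (p : L × W), X ν * b p = b (p.1 + ν, p.2) := fun ν p => by
    rw [hb, hb, ← mul_assoc, ← hXadd, add_comm]
  have hBern' : ∀ (i : B) (l : L), X l * T (cs.simple i)
      = T (cs.simple i) * X (σ (cs.simple i) l) + (q - q⁻¹) • bern' X (α i) (αv i l) l := by
    intro i l; rw [hBern]; rfl
  have hskew : ∀ (i : B) (l : L),
      bern' X (α i) (αv i (σ (cs.simple i) l)) (σ (cs.simple i) l)
        = - bern' X (α i) (αv i l) l := by
    intro i l
    have h2 : αv i (σ (cs.simple i) l) = -(αv i l) := by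
      rw [hrefl, map_sub, map_zsmul, hpair, smul_eq_mul]; ring
    rw [h2, hrefl]
    exact bern'_skew X (α i) (αv i l) l
  have hTX : ∀ (i : B) (l : L), T (cs.simple i) * X l
      = X (σ (cs.simple i) l) * T (cs.simple i) + (q - q⁻¹) • bern' X (α i) (αv i l) l := by
    intro i l
    have h := hBern' i (σ (cs.simple i) l)
    rw [hσs2, hskew i l, smul_neg, ← sub_eq_add_neg, eq_sub_iff_add_eq] at h
    exact h.symm
  -- ### spans
  have hbern_mem : ∀ (i : B) (m : ℤ) (l : L),
      bern' X (α i) m l ∈ Submodule.span ℂ (b '' {p : L × W | p.2 = 1}) := by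
    intro i m l
    have hXmem : ∀ ν : L, X ν ∈ Submodule.span ℂ (b '' {p : L × W | p.2 = 1}) := fun ν =>
      Submodule.subset_span ⟨(ν, 1), rfl, hb1 ν⟩
    rw [bern']
    split
    · exact Submodule.sum_mem _ fun j _ => hXmem _
    · exact Submodule.neg_mem _ (Submodule.sum_mem _ fun j _ => hXmem _)
  have hXspan_mulT : ∀ h ∈ Submodule.span ℂ (b '' {p : L × W | p.2 = 1}), ∀ u : W,
      h * T u ∈ Submodule.span ℂ (b '' {p : L × W | p.2 = u}) := by
    intro h hh u
    induction hh using Submodule.span_induction with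
    | mem x hx =>
      obtain ⟨p, hp, rfl⟩ := hx
      have hp2 : p = (p.1, 1) := by rw [← hp]
      rw [hp2, hb1]
      exact Submodule.subset_span ⟨(p.1, u), rfl, hb (p.1, u)⟩
    | zero => rw [zero_mul]; exact Submodule.zero_mem _
    | add x y _ _ hx hy => rw [add_mul]; exact Submodule.add_mem _ hx hy
    | smul r x _ hx => rw [smul_mul_assoc]; exact Submodule.smul_mem _ _ hx
  set N : ℕ → Submodule ℂ H :=
    fun k => Submodule.span ℂ (b '' {p : L × W | cs.length p.2 < k}) with hN
  have hNmono : ∀ {k k' : ℕ}, k ≤ k' → N k ≤ N k' := fun {k k'} hk =>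
    Submodule.span_mono (Set.image_mono fun p hp => lt_of_lt_of_le hp hk)
  have hXN : ∀ (ν : L) (k : ℕ), ∀ h ∈ N k, X ν * h ∈ N k := by
    intro ν k h hh
    induction hh using Submodule.span_induction with
    | mem x hx =>
      obtain ⟨p, hp, rfl⟩ := hx
      rw [hXb]
      exact Submodule.subset_span ⟨(p.1 + ν, p.2), hp, rfl⟩
    | zero => rw [mul_zero]; exact Submodule.zero_mem _
    | add x y _ _ hx hy => rw [mul_add]; exact Submodule.add_mem _ hx hy
    | smul r x _ hx => rw [mul_smul_comm]; exact Submodule.smul_mem _ _ hx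
  have hspanu_le : ∀ (u : W) (k : ℕ), cs.length u < k →
      Submodule.span ℂ (b '' {p : L × W | p.2 = u}) ≤ N k := fun u k hu =>
    Submodule.span_mono (Set.image_mono fun p hp => by
      rw [Set.mem_setOf_eq] at hp ⊢; rw [hp]; exact hu)
  have hTiN : ∀ (i : B) (k : ℕ), ∀ h ∈ N k, T (cs.simple i) * h ∈ N (k + 1) := by
    intro i k h hh
    induction hh using Submodule.span_induction with
    | zero => rw [mul_zero]; exact Submodule.zero_mem _
    | add x y _ _ hx hy => rw [mul_add]; exact Submodule.add_mem _ hx hy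
    | smul r x _ hx => rw [mul_smul_comm]; exact Submodule.smul_mem _ _ hx
    | mem x hx =>
      obtain ⟨p, hp, rfl⟩ := hx
      rw [Set.mem_setOf_eq] at hp
      rw [hb, ← mul_assoc, hTX i p.1, add_mul, smul_mul_assoc]
      refine Submodule.add_mem _ ?_ (Submodule.smul_mem _ _
        (hspanu_le p.2 (k + 1) (by omega) (hXspan_mulT _ (hbern_mem i _ _) p.2)))
      rw [mul_assoc]
      rcases cs.length_simple_mul p.2 i with hlen | hlen
      · have hTT : T (cs.simple i * p.2) = T (cs.simple i) * T p.2 :=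
          hTmul _ _ (by rw [cs.length_simple]; omega)
        rw [← hTT, ← hb (σ (cs.simple i) p.1, cs.simple i * p.2)]
        exact Submodule.subset_span ⟨(σ (cs.simple i) p.1, cs.simple i * p.2), show cs.length (cs.simple i * p.2) < k + 1 by omega, rfl⟩
      · set v := cs.simple i * p.2 with hv
        have hvp : cs.simple i * v = p.2 := by
          rw [hv, ← mul_assoc, cs.simple_mul_simple_self, one_mul]
        have hvlen : cs.length v + 1 = cs.length p.2 := hlen
        have hTp : T p.2 = T (cs.simple i) * T v := by
          conv_lhs => rw [← hvp]
          exact hTmul _ _ (by rw [hvp, cs.length_simple]; omega)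
        have hTT : T (cs.simple i) * T p.2 = (q - q⁻¹) • T p.2 + T v := by
          rw [hTp, ← mul_assoc, hquad, add_mul, smul_mul_assoc, one_mul, ← hTp]
        rw [hTT, mul_add, mul_smul_comm]
        refine Submodule.add_mem _ (Submodule.smul_mem _ _ ?_) ?_
        · rw [← hb (σ (cs.simple i) p.1, p.2)]
          exact Submodule.subset_span ⟨(σ (cs.simple i) p.1, p.2), show cs.length p.2 < k + 1 by omega, rfl⟩
        · rw [← hb (σ (cs.simple i) p.1, v)]
          exact Submodule.subset_span ⟨(σ (cs.simple i) p.1, v), show cs.length v < k + 1 by omega, rfl⟩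
  have hTwX : ∀ (n : ℕ) (w : W), cs.length w = n → ∀ l : L,
      T w * X l - X (σ w l) * T w ∈ N (cs.length w) := by
    intro n
    induction n using Nat.strong_induction_on with
    | _ n ih =>
      intro w hw l
      rcases eq_or_ne w 1 with rfl | hne
      · rw [hT1, hσ1, one_mul, mul_one, sub_self]; exact Submodule.zero_mem _
      · obtain ⟨i, hdesc⟩ := cs.exists_leftDescent_of_ne_one hne
        have hw'len : cs.length (cs.simple i * w) + 1 = cs.length w :=
          (cs.isLeftDescent_iff).mp hdesc
        set w' := cs.simple i * w with hw'
        have hww : w = cs.simple i * w' := by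
          rw [hw', ← mul_assoc, cs.simple_mul_simple_self, one_mul]
        have hT : T w = T (cs.simple i) * T w' := by
          conv_lhs => rw [hww]
          exact hTmul _ _ (by rw [← hww, cs.length_simple]; omega)
        have ihw' := ih (cs.length w') (by omega) w' rfl l
        set E := T w' * X l - X (σ w' l) * T w' with hE
        have hσc : σ (cs.simple i) (σ w' l) = σ w l := by rw [← hσmul, ← hww]
        have key : T w * X l - X (σ w l) * T w
            = (q - q⁻¹) • (bern' X (α i) (αv i (σ w' l)) (σ w' l) * T w')
              + T (cs.simple i) * E := by
          have e1 : T w' * X l = X (σ w' l) * T w' + E := by rw [hE]; abel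
          rw [hT, mul_assoc, e1, mul_add, ← mul_assoc (T (cs.simple i)), hTX i (σ w' l), hσc,
            add_mul, smul_mul_assoc, mul_assoc (X (σ w l))]
          abel
        rw [key]
        refine Submodule.add_mem _ (Submodule.smul_mem _ _ ?_) ?_
        · exact hspanu_le w' _ (by omega) (hXspan_mulT _ (hbern_mem i _ _) w')
        · have hmem := hTiN i (cs.length w') E ihw'
          have h2 : cs.length w' + 1 = cs.length w := by omega
          rw [h2] at hmem
          exact hmem
  -- ### computing coordinates
  have hreprSum : ∀ (f : L × W → L × W) (d : (L × W) →₀ ℂ),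
      b.repr (d.sum fun p v => v • b (f p)) = Finsupp.mapDomain f d := by
    intro f d
    rw [map_finsuppSum, Finsupp.mapDomain]
    refine Finsupp.sum_congr fun p _ => ?_
    rw [map_smul, b.repr_self, Finsupp.smul_single, smul_eq_mul, mul_one]
  have hcentral_supp : ∀ z ∈ Set.center H, ∀ p : L × W, p.2 ≠ 1 → b.repr z p = 0 := by
    intro z hz p hp
    by_contra hcne
    set c := b.repr z with hc
    have hps : p ∈ c.support := Finsupp.mem_support_iff.mpr hcne
    obtain ⟨p₀, hp₀s, hmax⟩ :=
      Finset.exists_max_image c.support (fun r => cs.length r.2) ⟨p, hps⟩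
    have hp₀ne : p₀.2 ≠ 1 := by
      intro h1
      have h2 := hmax p hps
      rw [h1, cs.length_one, Nat.le_zero] at h2
      exact hp (cs.length_eq_zero_iff.mp h2)
    have hzsum : z = c.sum fun r v => v • b r := by
      conv_lhs => rw [← b.linearCombination_repr z]
      rw [Finsupp.linearCombination_apply, hc]
    have hshift : ∀ μ lam : L, c (lam + (μ - σ p₀.2 μ), p₀.2) = c (lam, p₀.2) := by
      intro μ lam
      set g₁ : L × W ≃ L × W :=
        ⟨fun r => (r.1 + μ, r.2), fun r => (r.1 - μ, r.2),
          fun r => by simp, fun r => by simp⟩ with hg₁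
      set g₂ : L × W ≃ L × W :=
        ⟨fun r => (r.1 + σ r.2 μ, r.2), fun r => (r.1 - σ r.2 μ, r.2),
          fun r => by simp, fun r => by simp⟩ with hg₂
      have hXz : X μ * z = z * X μ := Semigroup.mem_center_iff.mp hz (X μ)
      have h1 : b.repr (X μ * z) = Finsupp.mapDomain g₁ c := by
        rw [hzsum, Finsupp.mul_sum, ← hreprSum (⇑g₁) c]
        congr 1
        refine Finsupp.sum_congr fun r _ => ?_
        rw [mul_smul_comm, hXb]
        rfl
      have hsplit : z * X μ = (c.sum fun r v => v • b (g₂ r))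
          + c.sum fun r v => v • (X r.1 * (T r.2 * X μ - X (σ r.2 μ) * T r.2)) := by
        rw [hzsum, Finsupp.sum_mul, ← Finsupp.sum_add]
        refine Finsupp.sum_congr fun r _ => ?_
        rw [smul_mul_assoc, ← smul_add]
        congr 1
        rw [hb, hb]
        show X r.1 * T r.2 * X μ
          = X (r.1 + σ r.2 μ) * T r.2 + X r.1 * (T r.2 * X μ - X (σ r.2 μ) * T r.2)
        rw [hXadd]
        noncomm_ring
      have hRmem : (c.sum fun r v => v • (X r.1 * (T r.2 * X μ - X (σ r.2 μ) * T r.2)))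
          ∈ N (cs.length p₀.2) := by
        refine Submodule.finsuppSum_mem (R := ℂ) (N (cs.length p₀.2)) c _ fun r hr => ?_
        refine Submodule.smul_mem _ _ (hXN _ _ _ ?_)
        exact hNmono (hmax r (Finsupp.mem_support_iff.mpr hr)) (hTwX (cs.length r.2) r.2 rfl μ)
      have hkey : ∀ ν : L, c (ν - μ, p₀.2) = c (ν - σ p₀.2 μ, p₀.2) := by
        intro ν
        have e1 : b.repr (X μ * z) (ν, p₀.2) = c (ν - μ, p₀.2) := by
          rw [h1, Finsupp.mapDomain_equiv_apply]
          rfl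
        have e2 : b.repr (z * X μ) (ν, p₀.2) = c (ν - σ p₀.2 μ, p₀.2) := by
          rw [hsplit, map_add, Finsupp.add_apply, hreprSum (⇑g₂) c,
            Finsupp.mapDomain_equiv_apply]
          have hz0 : b.repr (c.sum fun r v =>
              v • (X r.1 * (T r.2 * X μ - X (σ r.2 μ) * T r.2))) (ν, p₀.2) = 0 := by
            have hsub := b.repr_support_subset_of_mem_span _ hRmem
            by_contra h0
            have hin := hsub (Finsupp.mem_support_iff.mpr h0)
            have hin' : cs.length (ν, p₀.2).2 < cs.length p₀.2 := hin
            exact lt_irrefl _ hin'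
          rw [hz0, add_zero]
          rfl
        rw [hXz] at e1
        rw [e1] at e2
        exact e2
      have hk := hkey (lam + μ)
      rw [show lam + μ - μ = lam by abel,
        show lam + μ - σ p₀.2 μ = lam + (μ - σ p₀.2 μ) by abel] at hk
      exact hk.symm
    have hD := hsep p₀.2 hp₀ne
    have himg : ((fun x : L => (p₀.1 + x, p₀.2)) ''
        {x : L | ∃ μ : L, (∀ i, 0 ≤ αv i μ) ∧ x = μ - σ p₀.2 μ}).Infinite :=
      hD.image (fun x _ y _ hxy => by
        have := congrArg Prod.fst hxy
        simpa using this)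
    have hsubs : ((fun x : L => (p₀.1 + x, p₀.2)) ''
        {x : L | ∃ μ : L, (∀ i, 0 ≤ αv i μ) ∧ x = μ - σ p₀.2 μ}) ⊆ ↑c.support := by
      rintro _ ⟨x, ⟨μ, hμdom, rfl⟩, rfl⟩
      rw [Finset.mem_coe, Finsupp.mem_support_iff, hshift μ p₀.1]
      have : (p₀.1, p₀.2) = p₀ := rfl
      rw [this]
      exact Finsupp.mem_support_iff.mp hp₀s
    exact (c.support.finite_toSet.subset hsubs).not_infinite himg
  have hcentral_inv : ∀ z ∈ Set.center H, ∀ (i : B) (l : L),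
      b.repr z (σ (cs.simple i) l, 1) = b.repr z (l, 1) := by
    intro z hz i l
    set c := b.repr z with hc
    have hsupp1 : ∀ r ∈ c.support, r.2 = (1 : W) := fun r hr => by
      by_contra h
      exact Finsupp.mem_support_iff.mp hr (hcentral_supp z hz r h)
    have hzsum : z = c.sum fun r v => v • b r := by
      conv_lhs => rw [← b.linearCombination_repr z]
      rw [Finsupp.linearCombination_apply, hc]
    have hsne : cs.simple i ≠ 1 := by
      intro h
      have h2 := cs.length_simple i
      rw [h, cs.length_one] at h2
      omega
    set e₁ : L × W ≃ L × W :=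
      ⟨fun r => (r.1, r.2 * cs.simple i), fun r => (r.1, r.2 * cs.simple i),
        fun r => by simp [mul_assoc, cs.simple_mul_simple_self],
        fun r => by simp [mul_assoc, cs.simple_mul_simple_self]⟩ with he₁
    set e₂ : L × W ≃ L × W :=
      ⟨fun r => (σ (cs.simple i) r.1, r.2 * cs.simple i),
        fun r => (σ (cs.simple i) r.1, r.2 * cs.simple i),
        fun r => by simp [mul_assoc, cs.simple_mul_simple_self, hσs2],
        fun r => by simp [mul_assoc, cs.simple_mul_simple_self, hσs2]⟩ with he₂
    have hzT : z * T (cs.simple i) = T (cs.simple i) * z :=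
      (Semigroup.mem_center_iff.mp hz (T (cs.simple i))).symm
    have h1 : b.repr (z * T (cs.simple i)) = Finsupp.mapDomain e₁ c := by
      rw [hzsum, Finsupp.sum_mul, ← hreprSum (⇑e₁) c]
      congr 1
      refine Finsupp.sum_congr fun r hr => ?_
      rw [smul_mul_assoc]
      congr 1
      rw [hb, hb]
      show X r.1 * T r.2 * T (cs.simple i) = X r.1 * T (r.2 * cs.simple i)
      rw [hsupp1 r hr, hT1, mul_one, one_mul]
    have hsplit : T (cs.simple i) * z
        = (c.sum fun r v => v • b (e₂ r))
          + c.sum fun r v => v • ((q - q⁻¹) • bern' X (α i) (αv i r.1) r.1) := by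
      rw [hzsum, Finsupp.mul_sum, ← Finsupp.sum_add]
      refine Finsupp.sum_congr fun r hr => ?_
      rw [mul_smul_comm, ← smul_add]
      congr 1
      have hbr : b r = X r.1 := by rw [hb, hsupp1 r hr, hT1, mul_one]
      rw [hbr, hTX i r.1]
      congr 2
      rw [hb]
      show X (σ (cs.simple i) r.1) * T (cs.simple i)
        = X (σ (cs.simple i) r.1) * T (r.2 * cs.simple i)
      rw [hsupp1 r hr, one_mul]
    have hz0 : b.repr (c.sum fun r v =>
        v • ((q - q⁻¹) • bern' X (α i) (αv i r.1) r.1)) (σ (cs.simple i) l, cs.simple i) = 0 := by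
      have hmem : (c.sum fun r v => v • ((q - q⁻¹) • bern' X (α i) (αv i r.1) r.1))
          ∈ Submodule.span ℂ (b '' {p : L × W | p.2 = 1}) :=
        Submodule.finsuppSum_mem (R := ℂ) _ c _ fun r hr =>
          Submodule.smul_mem _ _ (Submodule.smul_mem _ _ (hbern_mem i _ _))
      have hsub := b.repr_support_subset_of_mem_span _ hmem
      by_contra h0
      have hin := hsub (Finsupp.mem_support_iff.mpr h0)
      have hin' : (σ (cs.simple i) l, cs.simple i).2 = (1 : W) := hin
      exact hsne hin'
    have e1 : b.repr (z * T (cs.simple i)) (σ (cs.simple i) l, cs.simple i)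
        = c (σ (cs.simple i) l, 1) := by
      rw [h1, Finsupp.mapDomain_equiv_apply]
      show c (σ (cs.simple i) l, cs.simple i * cs.simple i) = _
      rw [cs.simple_mul_simple_self]
    have e2 : b.repr (T (cs.simple i) * z) (σ (cs.simple i) l, cs.simple i)
        = c (l, 1) := by
      rw [hsplit, map_add, Finsupp.add_apply, hreprSum (⇑e₂) c,
        Finsupp.mapDomain_equiv_apply, hz0, add_zero]
      show c (σ (cs.simple i) (σ (cs.simple i) l), cs.simple i * cs.simple i) = _
      rw [cs.simple_mul_simple_self, hσs2]
    rw [← e1, ← e2, hzT]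
  -- ### orbit sums are central
  have horb : ∀ lam : L, (∑ w : W, X (σ w lam)) ∈ Set.center H := by
    intro lam
    set Z := ∑ w : W, X (σ w lam) with hZ
    have hZX : ∀ ν : L, Z * X ν = X ν * Z := by
      intro ν
      rw [hZ, Finset.sum_mul, Finset.mul_sum]
      refine Finset.sum_congr rfl fun w _ => ?_
      rw [← hXadd, ← hXadd, add_comm]
    have hZT : ∀ i : B, Z * T (cs.simple i) = T (cs.simple i) * Z := by
      intro i
      have hA : (∑ w : W, bern' X (α i) (αv i (σ w lam)) (σ w lam)) = 0 := by
        set A := ∑ w : W, bern' X (α i) (αv i (σ w lam)) (σ w lam) with hA'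
        have h1 : A = ∑ w : W,
            bern' X (α i) (αv i (σ (cs.simple i * w) lam)) (σ (cs.simple i * w) lam) := by
          rw [hA']
          exact (Fintype.sum_bijective (fun w => cs.simple i * w)
            (Group.mulLeft_bijective _) _ _ fun w => rfl).symm
        have h2 : A = -A := by
          conv_lhs => rw [h1]
          rw [hA', ← Finset.sum_neg_distrib]
          refine Finset.sum_congr rfl fun w _ => ?_
          rw [hσmul]
          exact hskew i (σ w lam)
        have h3 : (2 : ℂ) • A = 0 := by
          rw [two_smul]
          nth_rewrite 2 [h2]
          exact add_neg_cancel A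
        calc A = (2 : ℂ)⁻¹ • ((2 : ℂ) • A) := by rw [smul_smul]; norm_num
        _ = 0 := by rw [h3, smul_zero]
      rw [hZ, Finset.sum_mul, Finset.mul_sum]
      calc (∑ w : W, X (σ w lam) * T (cs.simple i))
          = ∑ w : W, (T (cs.simple i) * X (σ (cs.simple i) (σ w lam))
              + (q - q⁻¹) • bern' X (α i) (αv i (σ w lam)) (σ w lam)) :=
            Finset.sum_congr rfl fun w _ => hBern' i (σ w lam)
        _ = (∑ w : W, T (cs.simple i) * X (σ (cs.simple i) (σ w lam)))
              + (q - q⁻¹) • ∑ w : W, bern' X (α i) (αv i (σ w lam)) (σ w lam) := by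
            rw [Finset.sum_add_distrib, Finset.smul_sum]
        _ = ∑ w : W, T (cs.simple i) * X (σ w lam) := by
            rw [hA, smul_zero, add_zero]
            refine Fintype.sum_bijective (fun w => cs.simple i * w)
              (Group.mulLeft_bijective _) _ _ fun w => ?_
            rw [hσmul]
    have hZTw : ∀ (n : ℕ) (w : W), cs.length w = n → Z * T w = T w * Z := by
      intro n
      induction n using Nat.strong_induction_on with
      | _ n ih =>
        intro w hw
        rcases eq_or_ne w 1 with rfl | hne
        · rw [hT1, mul_one, one_mul]
        · obtain ⟨i, hdesc⟩ := cs.exists_leftDescent_of_ne_one hne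
          have hw'len : cs.length (cs.simple i * w) + 1 = cs.length w :=
            (cs.isLeftDescent_iff).mp hdesc
          set w' := cs.simple i * w with hw'
          have hww : w = cs.simple i * w' := by
            rw [hw', ← mul_assoc, cs.simple_mul_simple_self, one_mul]
          have hT : T w = T (cs.simple i) * T w' := by
            conv_lhs => rw [hww]
            exact hTmul _ _ (by rw [← hww, cs.length_simple]; omega)
          rw [hT, ← mul_assoc, hZT i, mul_assoc, ih (cs.length w') (by omega) w' rfl,
            ← mul_assoc]
    rw [Semigroup.mem_center_iff]
    intro g
    have hg : g ∈ Submodule.span ℂ (Set.range b) := by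
      rw [b.span_eq]; exact Submodule.mem_top
    induction hg using Submodule.span_induction with
    | mem x hx =>
      obtain ⟨r, rfl⟩ := hx
      rw [hb]
      calc X r.1 * T r.2 * Z = X r.1 * (T r.2 * Z) := by rw [mul_assoc]
        _ = X r.1 * (Z * T r.2) := by rw [hZTw (cs.length r.2) r.2 rfl]
        _ = (X r.1 * Z) * T r.2 := by rw [mul_assoc]
        _ = (Z * X r.1) * T r.2 := by rw [hZX]
        _ = Z * (X r.1 * T r.2) := by rw [mul_assoc]
    | zero => rw [zero_mul, mul_zero]
    | add x y _ _ hx hy => rw [add_mul, mul_add, hx, hy]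
    | smul r x _ hx => rw [smul_mul_assoc, mul_smul_comm, hx]
  -- ### final assembly
  refine ⟨?_, hcentral_supp, hcentral_inv⟩
  apply Set.Subset.antisymm
  · intro z hz
    rw [SetLike.mem_coe]
    set c := b.repr z with hc
    have hsupp1 : ∀ r ∈ c.support, r.2 = (1 : W) := fun r hr => by
      by_contra h
      exact Finsupp.mem_support_iff.mp hr (hcentral_supp z hz r h)
    have hinv : ∀ (w : W) (l : L), c (σ w l, 1) = c (l, 1) := by
      intro w
      obtain ⟨ω, rfl⟩ := cs.wordProd_surjective w
      induction ω with
      | nil => intro l; rw [cs.wordProd_nil, hσ1]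
      | cons i ω ih =>
        intro l
        rw [cs.wordProd_cons, hσmul, hcentral_inv z hz i (σ (cs.wordProd ω) l)]
        exact ih l
    have hzsum : z = ∑ r ∈ c.support, c r • X r.1 := by
      conv_lhs => rw [← b.linearCombination_repr z]
      rw [Finsupp.linearCombination_apply, hc, Finsupp.sum]
      refine Finset.sum_congr rfl fun r hr => ?_
      congr 1
      rw [hb, hsupp1 r hr, hT1, mul_one]
    have hclaim : ∀ w : W, (∑ r ∈ c.support, c r • X (σ w r.1)) = z := by
      intro w
      conv_rhs => rw [hzsum]
      refine Finset.sum_nbij' (fun r => (σ w r.1, r.2)) (fun r => ((σ w).symm r.1, r.2))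
        ?_ ?_ ?_ ?_ ?_
      · intro r hr
        rw [Finsupp.mem_support_iff]
        show c (σ w r.1, r.2) ≠ 0
        have h1 : ((σ w r.1, r.2) : L × W) = ((σ w r.1, (1 : W)) : L × W) := by rw [hsupp1 r hr]
        rw [h1, hinv w r.1]
        have h2 : ((r.1, (1 : W)) : L × W) = r := by rw [← hsupp1 r hr]
        rw [h2]
        exact Finsupp.mem_support_iff.mp hr
      · intro r hr
        rw [Finsupp.mem_support_iff]
        show c ((σ w).symm r.1, r.2) ≠ 0
        have h1 : (((σ w).symm r.1, r.2) : L × W) = (((σ w).symm r.1, (1 : W)) : L × W) := by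
          rw [hsupp1 r hr]
        rw [h1]
        have h2 := hinv w ((σ w).symm r.1)
        rw [AddEquiv.apply_symm_apply] at h2
        rw [← h2]
        have h3 : ((r.1, (1 : W)) : L × W) = r := by rw [← hsupp1 r hr]
        rw [h3]
        exact Finsupp.mem_support_iff.mp hr
      · intro r _
        simp
      · intro r _
        simp
      · intro r hr
        show c r • X (σ w r.1) = c (σ w r.1, r.2) • X (σ w r.1)
        have h1 : ((σ w r.1, r.2) : L × W) = ((σ w r.1, (1 : W)) : L × W) := by rw [hsupp1 r hr]
        have h2 : ((r.1, (1 : W)) : L × W) = r := by rw [← hsupp1 r hr]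
        rw [h1, hinv w r.1, h2]
    have hcard : ((Fintype.card W : ℂ)) • z
        = ∑ r ∈ c.support, c r • (∑ w : W, X (σ w r.1)) := by
      have hs : ∑ w : W, (∑ r ∈ c.support, c r • X (σ w r.1)) = ∑ w : W, z :=
        Finset.sum_congr rfl fun w _ => hclaim w
      rw [Finset.sum_comm] at hs
      rw [Finset.sum_const, Finset.card_univ] at hs
      rw [← Nat.cast_smul_eq_nsmul ℂ] at hs
      rw [← hs]
      exact Finset.sum_congr rfl fun r _ => by rw [Finset.smul_sum]
    have hcne : ((Fintype.card W : ℂ)) ≠ 0 := Nat.cast_ne_zero.mpr Fintype.card_ne_zero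
    have hz2 : z = (Fintype.card W : ℂ)⁻¹ • ∑ r ∈ c.support, c r • (∑ w : W, X (σ w r.1)) := by
      rw [← hcard, smul_smul, inv_mul_cancel₀ hcne, one_smul]
    rw [hz2]
    exact Submodule.smul_mem _ _ (Submodule.sum_mem _ fun r _ =>
      Submodule.smul_mem _ _ (Submodule.subset_span ⟨r.1, rfl⟩))
  · intro h hh
    rw [SetLike.mem_coe] at hh
    induction hh using Submodule.span_induction with
    | mem x hx =>
      obtain ⟨l, rfl⟩ := hx
      exact horb l
    | zero => exact Set.zero_mem_center
    | add x y _ _ hx hy => exact Set.add_mem_center hx hy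
    | smul r x _ hx =>
      rw [Semigroup.mem_center_iff] at hx ⊢
      intro g
      rw [mul_smul_comm, smul_mul_assoc, hx g]
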